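/- Let B ⊆ ℝⁿ be a measurable set, q > 0, ϑ ≥ 0 and Π > 0. Let w be a real-valued measurable function on B with ‖w‖_{L^{q,∞}(B)} < ∞, and let g : B → [0,∞) be measurable and satisfy ∫_{B ∩ {|w| ≤ k}} g dx ≤ Π k^ϑ for every k > 0. Then there exists a constant C = C(n,q,ϑ) > 0 such that ‖g‖_{L^{q/(q+ϑ),∞}(B)} ≤ C Π ‖w‖_{L^{q,∞}(B)}^ϑ. -/

import Mathlib

open MeasureTheory

/-- The Marcinkiewicz (weak Lebesgue) quasi-norm
`‖φ‖_{L^{q,∞}(B)} = sup_{λ>0} λ · ℒⁿ({x ∈ B : |φ x| > λ})^{1/q}`, valued in `ℝ≥0∞`. -/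
noncomputable def weakNorm {n : ℕ} (q : ℝ) (B : Set (EuclideanSpace ℝ (Fin n)))
    (φ : EuclideanSpace ℝ (Fin n) → ℝ) : ENNReal :=
  ⨆ (lam : ℝ) (_ : 0 < lam),
    ENNReal.ofReal lam * (volume {x ∈ B | lam < |φ x|}) ^ (1 / q)

/-- Lemma 3.2 of the paper: if `∫_{B ∩ {|w| ≤ k}} g ≤ Π k^ϑ` for all `k > 0` and
`w ∈ L^{q,∞}(B)`, then `‖g‖_{L^{q/(q+ϑ),∞}(B)} ≤ C Π ‖w‖_{L^{q,∞}(B)}^ϑ`. -/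
theorem statement6 (n : ℕ) (q ϑ : ℝ) (hq : 0 < q) (hϑ : 0 ≤ ϑ) :
    ∃ C : ℝ, 0 < C ∧
      ∀ (B : Set (EuclideanSpace ℝ (Fin n))) (PP : ℝ)
        (w g : EuclideanSpace ℝ (Fin n) → ℝ),
        MeasurableSet B → 0 < PP →
        AEMeasurable w (volume.restrict B) → AEMeasurable g (volume.restrict B) →
        (∀ x ∈ B, 0 ≤ g x) →
        weakNorm q B w ≠ ⊤ →
        (∀ k : ℝ, 0 < k →
          ∫⁻ x in B ∩ {x | |w x| ≤ k}, ENNReal.ofReal (g x) ≤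
            ENNReal.ofReal (PP * k ^ ϑ)) →
        weakNorm (q / (q + ϑ)) B g ≤ ENNReal.ofReal (C * PP) * (weakNorm q B w) ^ ϑ := by
  have hqϑ : 0 < q + ϑ := by linarith
  have hCpos : (0:ℝ) < 2 ^ ((q + ϑ) / q) := Real.rpow_pos_of_pos two_pos _
  have hC1 : (1:ℝ) ≤ 2 ^ ((q + ϑ) / q) :=
    Real.one_le_rpow (by norm_num) (by positivity)
  refine ⟨2 ^ ((q + ϑ) / q), hCpos, ?_⟩
  intro B PP w g hB hPP hw hg hg0 hM hint
  set C : ℝ := 2 ^ ((q + ϑ) / q) with hCdef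
  set M := weakNorm q B w with hMdef
  set m := M.toReal with hmdef
  have hm0 : 0 ≤ m := ENNReal.toReal_nonneg
  have hMeq : M = ENNReal.ofReal m := (ENNReal.ofReal_toReal hM).symm
  -- tail bound from the weak norm of w
  have tail : ∀ k : ℝ, 0 < k →
      volume {x ∈ B | k < |w x|} ≤ (ENNReal.ofReal m / ENNReal.ofReal k) ^ q := by
    intro k hk
    have h1 : ENNReal.ofReal k * (volume {x ∈ B | k < |w x|}) ^ (1 / q) ≤ M := by
      rw [hMdef, weakNorm]
      exact le_iSup₂ (f := fun (lam : ℝ) (_ : 0 < lam) =>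
        ENNReal.ofReal lam * (volume {x ∈ B | lam < |w x|}) ^ (1 / q)) k hk
    have h2 : (volume {x ∈ B | k < |w x|}) ^ (1 / q) ≤ ENNReal.ofReal m / ENNReal.ofReal k := by
      rw [ENNReal.le_div_iff_mul_le (Or.inl (by simp [hk])) (Or.inl ENNReal.ofReal_ne_top)]
      rw [mul_comm]
      rw [hMeq] at h1
      exact h1
    calc volume {x ∈ B | k < |w x|}
        = ((volume {x ∈ B | k < |w x|}) ^ (1 / q)) ^ q := by
          rw [← ENNReal.rpow_mul, one_div, inv_mul_cancel₀ hq.ne', ENNReal.rpow_one]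
      _ ≤ _ := ENNReal.rpow_le_rpow h2 hq.le
  -- key layer-cake bound
  have key : ∀ lam k : ℝ, 0 < lam → 0 < k →
      volume {x ∈ B | lam < |g x|} ≤
        ENNReal.ofReal (PP * k ^ ϑ / lam) + (ENNReal.ofReal m / ENNReal.ofReal k) ^ q := by
    intro lam k hlam hk
    set μk := volume.restrict (B ∩ {x | |w x| ≤ k}) with hμk
    have hgk : AEMeasurable (fun x => ENNReal.ofReal (g x)) μk :=
      ENNReal.measurable_ofReal.comp_aemeasurable
        (hg.mono_measure (Measure.restrict_mono Set.inter_subset_left le_rfl))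
    have h1 := mul_meas_ge_le_lintegral₀ hgk (ENNReal.ofReal lam)
    have h2 : ∫⁻ a, ENNReal.ofReal (g a) ∂μk ≤ ENNReal.ofReal (PP * k ^ ϑ) := hint k hk
    have h3 : volume ({x | ENNReal.ofReal lam ≤ ENNReal.ofReal (g x)} ∩ (B ∩ {x | |w x| ≤ k}))
        ≤ μk {x | ENNReal.ofReal lam ≤ ENNReal.ofReal (g x)} := Measure.le_restrict_apply _ _
    have hcheb : volume ({x | ENNReal.ofReal lam ≤ ENNReal.ofReal (g x)} ∩ (B ∩ {x | |w x| ≤ k}))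
        ≤ ENNReal.ofReal (PP * k ^ ϑ / lam) := by
      rw [ENNReal.ofReal_div_of_pos hlam,
        ENNReal.le_div_iff_mul_le (Or.inl (by simp [hlam])) (Or.inl ENNReal.ofReal_ne_top),
        mul_comm]
      exact le_trans (mul_le_mul_right h3 _) (le_trans h1 h2)
    have hsub : {x ∈ B | lam < |g x|} ⊆
        ({x | ENNReal.ofReal lam ≤ ENNReal.ofReal (g x)} ∩ (B ∩ {x | |w x| ≤ k})) ∪
          {x ∈ B | k < |w x|} := by
      rintro x ⟨hxB, hx⟩
      rcases le_or_gt (|w x|) k with h | h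
      · left
        refine ⟨?_, hxB, h⟩
        rw [abs_of_nonneg (hg0 x hxB)] at hx
        exact Set.mem_setOf.mpr (ENNReal.ofReal_le_ofReal hx.le)
      · exact Or.inr ⟨hxB, h⟩
    calc volume {x ∈ B | lam < |g x|} ≤ _ := measure_mono hsub
      _ ≤ _ := measure_union_le _ _
      _ ≤ _ := add_le_add hcheb (tail k hk)
  -- main estimate
  have hexp : 1 / (q / (q + ϑ)) = (q + ϑ) / q := one_div_div q (q + ϑ)
  rw [weakNorm]
  refine iSup₂_le fun lam hlam => ?_
  rw [hexp]
  rcases eq_or_lt_of_le hm0 with hm | hm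
  · -- M = 0 case
    have hM0 : M = 0 := by rw [hMeq, ← hm, ENNReal.ofReal_zero]
    have tail0 : ∀ k : ℝ, 0 < k →
        volume {x ∈ B | lam < |g x|} ≤ ENNReal.ofReal (PP * k ^ ϑ / lam) := by
      intro k hk
      have := key lam k hlam hk
      rwa [← hm, ENNReal.ofReal_zero, ENNReal.zero_div,
        ENNReal.zero_rpow_of_pos hq, add_zero] at this
    rcases eq_or_lt_of_le hϑ with hϑ0 | hϑ0
    · -- ϑ = 0
      have hs1 : (q + ϑ) / q = 1 := by rw [← hϑ0, add_zero, div_self hq.ne']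
      rw [hs1, ENNReal.rpow_one, hM0, ← hϑ0, ENNReal.rpow_zero, mul_one]
      have h1 : volume {x ∈ B | lam < |g x|} ≤ ENNReal.ofReal (PP / lam) := by
        have := tail0 1 one_pos
        rwa [← hϑ0, Real.rpow_zero, mul_one] at this
      calc ENNReal.ofReal lam * volume {x ∈ B | lam < |g x|}
          ≤ ENNReal.ofReal lam * ENNReal.ofReal (PP / lam) := mul_le_mul_right h1 _
        _ = ENNReal.ofReal (lam * (PP / lam)) := (ENNReal.ofReal_mul hlam.le).symm
        _ = ENNReal.ofReal PP := by rw [mul_div_cancel₀ _ hlam.ne']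
        _ ≤ ENNReal.ofReal (C * PP) :=
            ENNReal.ofReal_le_ofReal (le_mul_of_one_le_left hPP.le hC1)
    · -- ϑ > 0
      have hvol : volume {x ∈ B | lam < |g x|} = 0 := by
        refine le_antisymm (ENNReal.le_of_forall_pos_le_add fun ε hε _ => ?_) (zero_le)
        rw [zero_add]
        set k : ℝ := ((ε : ℝ) * lam / PP) ^ (ϑ⁻¹) with hkdef
        have hk : 0 < k := Real.rpow_pos_of_pos (by positivity) _
        have hkϑ : k ^ ϑ = (ε : ℝ) * lam / PP := by
          rw [hkdef, ← Real.rpow_mul (by positivity), inv_mul_cancel₀ hϑ0.ne', Real.rpow_one]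
        have := tail0 k hk
        rw [hkϑ] at this
        calc volume {x ∈ B | lam < |g x|}
            ≤ ENNReal.ofReal (PP * ((ε : ℝ) * lam / PP) / lam) := this
          _ = ENNReal.ofReal (ε : ℝ) := by
              congr 1
              field_simp
          _ = (ε : ENNReal) := ENNReal.ofReal_coe_nnreal
      rw [hvol, ENNReal.zero_rpow_of_pos (by positivity), mul_zero]
      exact zero_le
  · -- m > 0
    set k : ℝ := (lam * m ^ q / PP) ^ ((q + ϑ)⁻¹) with hkdef
    have hmq : (0:ℝ) < m ^ q := Real.rpow_pos_of_pos hm q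
    have ht : (0:ℝ) < lam * m ^ q / PP := by positivity
    have hk : 0 < k := Real.rpow_pos_of_pos ht _
    have hkpow : k ^ (q + ϑ) = lam * m ^ q / PP := by
      rw [hkdef, ← Real.rpow_mul ht.le, inv_mul_cancel₀ hqϑ.ne', Real.rpow_one]
    have hkq : (0:ℝ) < k ^ q := Real.rpow_pos_of_pos hk q
    have hkϑ : (0:ℝ) < k ^ ϑ := Real.rpow_pos_of_pos hk ϑ
    have hbal : PP * k ^ ϑ / lam = (m / k) ^ q := by
      rw [Real.div_rpow hm0 hk.le]
      rw [div_eq_div_iff hlam.ne' hkq.ne']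
      have h1 : k ^ q * k ^ ϑ = lam * m ^ q / PP := by
        rw [← Real.rpow_add hk, hkpow]
      field_simp at h1
      linarith [h1]
    have hDpos : (0:ℝ) < (m / k) ^ q := Real.rpow_pos_of_pos (by positivity) q
    have hvol : volume {x ∈ B | lam < |g x|} ≤ ENNReal.ofReal (2 * (m / k) ^ q) := by
      have h1 := key lam k hlam hk
      rw [← ENNReal.ofReal_div_of_pos hk, ENNReal.ofReal_rpow_of_pos (by positivity), hbal,
        ← ENNReal.ofReal_add hDpos.le hDpos.le] at h1
      convert h1 using 2
      ring
    have hfinal : lam * (2 * (m / k) ^ q) ^ ((q + ϑ) / q) = C * PP * m ^ ϑ := by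
      rw [Real.mul_rpow (by norm_num) hDpos.le,
        ← Real.rpow_mul (by positivity : (0:ℝ) ≤ m / k)]
      have he : q * ((q + ϑ) / q) = q + ϑ := by field_simp
      rw [he, Real.div_rpow hm0 hk.le, hkpow, Real.rpow_add hm]
      rw [hCdef]
      field_simp
    calc ENNReal.ofReal lam * volume {x ∈ B | lam < |g x|} ^ ((q + ϑ) / q)
        ≤ ENNReal.ofReal lam * ENNReal.ofReal (2 * (m / k) ^ q) ^ ((q + ϑ) / q) :=
          mul_le_mul_right (ENNReal.rpow_le_rpow hvol (by positivity)) _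
      _ = ENNReal.ofReal lam * ENNReal.ofReal ((2 * (m / k) ^ q) ^ ((q + ϑ) / q)) := by
          rw [ENNReal.ofReal_rpow_of_pos (by positivity)]
      _ = ENNReal.ofReal (lam * (2 * (m / k) ^ q) ^ ((q + ϑ) / q)) :=
          (ENNReal.ofReal_mul hlam.le).symm
      _ = ENNReal.ofReal (C * PP * m ^ ϑ) := by rw [hfinal]
      _ = ENNReal.ofReal (C * PP) * ENNReal.ofReal (m ^ ϑ) :=
          ENNReal.ofReal_mul (by positivity)
      _ = ENNReal.ofReal (C * PP) * M ^ ϑ := by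
          rw [hMeq, ENNReal.ofReal_rpow_of_pos hm]
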